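/- For δ ∈ (0,1) define two probability distributions on {0,1} × {a,b} × {a,b}: P₁(δ) puts mass 1/4 on (0,a,a), 1/4 on (0,b,b), (1+δ)/4 on (1,a,b), (1−δ)/4 on (1,b,a); P₂(δ) puts mass (1+δ)/(4−2δ²) on (0,a,a), (1−δ)/(4−2δ²) on (0,b,b), (1−δ²)/(4−2δ²) on (1,a,b), (1−δ²)/(4−2δ²) on (1,b,a). Consider the mixture in which a label j ∈ {1,2} is drawn uniformly and then (ω, s₁, s₂) is drawn from P_j(δ), and let x_i = P_j(ω = 1 | s_i) denote expert i's posterior computed within the realized structure P_j(δ). Then: (a) there exists a function d : {1,2} × [0,1]² → {0,1} with d(j, x₁, x₂) = ω almost surely under the mixture; and (b) for every ε > 0 there exists δ₀ > 0 such that for all δ ∈ (0, δ₀) and every function f : [0,1]² → [0,1], the expected square loss E[(f(x₁, x₂) − ω)²] under the mixture is at least 1/4 − ε. -/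

import Mathlib

noncomputable section

/-- The information structure `P₁(δ)` (signals: `false = a`, `true = b`). -/
def PA (δ : ℝ) (w s₁ s₂ : Bool) : ℝ :=
  if w = false ∧ s₁ = s₂ then 1/4
  else if w = true ∧ s₁ = false ∧ s₂ = true then (1 + δ)/4
  else if w = true ∧ s₁ = true ∧ s₂ = false then (1 - δ)/4
  else 0

/-- The information structure `P₂(δ)`. -/
def PB (δ : ℝ) (w s₁ s₂ : Bool) : ℝ :=
  if w = false ∧ s₁ = false ∧ s₂ = false then (1 + δ)/(4 - 2*δ^2)
  else if w = false ∧ s₁ = true ∧ s₂ = true then (1 - δ)/(4 - 2*δ^2)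
  else if w = true ∧ s₁ ≠ s₂ then (1 - δ^2)/(4 - 2*δ^2)
  else 0

/-- Expert 1's posterior `P(ω=1 | s₁ = t)` within the structure `q`. -/
def post1 (q : Bool → Bool → Bool → ℝ) (t : Bool) : ℝ :=
  (∑ s₂ : Bool, q true t s₂) / (∑ w : Bool, ∑ s₂ : Bool, q w t s₂)

/-- Expert 2's posterior `P(ω=1 | s₂ = t)` within the structure `q`. -/
def post2 (q : Bool → Bool → Bool → ℝ) (t : Bool) : ℝ :=
  (∑ s₁ : Bool, q true s₁ t) / (∑ w : Bool, ∑ s₁ : Bool, q w s₁ t)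

/-- The expected square loss of `f` under the uniform mixture of `P₁(δ)` and `P₂(δ)`,
where `f` is applied to the experts' posteriors computed within the realized structure. -/
def mixLoss (δ : ℝ) (f : ℝ → ℝ → ℝ) : ℝ :=
  (1/2) * (∑ w : Bool, ∑ s₁ : Bool, ∑ s₂ : Bool,
      PA δ w s₁ s₂ * (f (post1 (PA δ) s₁) (post2 (PA δ) s₂) - (if w then 1 else 0))^2)
  + (1/2) * (∑ w : Bool, ∑ s₁ : Bool, ∑ s₂ : Bool,
      PB δ w s₁ s₂ * (f (post1 (PB δ) s₁) (post2 (PB δ) s₂) - (if w then 1 else 0))^2)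


section aux

variable {δ : ℝ}

lemma pA1f (h0 : 0 < δ) (h1 : δ < 1) : post1 (PA δ) false = (1+δ)/(2+δ) := by
  simp [post1, PA, Fintype.sum_bool]
  rw [div_eq_div_iff (by linarith) (by linarith)]; ring

lemma pA1t (h0 : 0 < δ) (h1 : δ < 1) : post1 (PA δ) true = (1-δ)/(2-δ) := by
  simp [post1, PA, Fintype.sum_bool]
  rw [div_eq_div_iff (by linarith) (by linarith)]; ring

lemma pA2f (h0 : 0 < δ) (h1 : δ < 1) : post2 (PA δ) false = (1-δ)/(2-δ) := by
  simp [post2, PA, Fintype.sum_bool]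
  rw [div_eq_div_iff (by linarith) (by linarith)]; ring

lemma pA2t (h0 : 0 < δ) (h1 : δ < 1) : post2 (PA δ) true = (1+δ)/(2+δ) := by
  simp [post2, PA, Fintype.sum_bool]
  rw [div_eq_div_iff (by linarith) (by linarith)]; ring

lemma pB1f (h0 : 0 < δ) (h1 : δ < 1) : post1 (PB δ) false = (1-δ)/(2-δ) := by
  have hD : (4:ℝ) - 2*δ^2 ≠ 0 := by nlinarith
  simp [post1, PB, Fintype.sum_bool]
  rw [← add_div, div_div_div_cancel_right₀]
  · rw [div_eq_div_iff (by nlinarith) (by linarith)]; ring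
  · exact hD

lemma pB1t (h0 : 0 < δ) (h1 : δ < 1) : post1 (PB δ) true = (1+δ)/(2+δ) := by
  have hD : (4:ℝ) - 2*δ^2 ≠ 0 := by nlinarith
  simp [post1, PB, Fintype.sum_bool]
  rw [← add_div, div_div_div_cancel_right₀]
  · rw [div_eq_div_iff (by nlinarith) (by linarith)]; ring
  · exact hD

lemma pB2f (h0 : 0 < δ) (h1 : δ < 1) : post2 (PB δ) false = (1-δ)/(2-δ) := by
  have hD : (4:ℝ) - 2*δ^2 ≠ 0 := by nlinarith
  simp [post2, PB, Fintype.sum_bool]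
  rw [← add_div, div_div_div_cancel_right₀]
  · rw [div_eq_div_iff (by nlinarith) (by linarith)]; ring
  · exact hD

lemma pB2t (h0 : 0 < δ) (h1 : δ < 1) : post2 (PB δ) true = (1+δ)/(2+δ) := by
  have hD : (4:ℝ) - 2*δ^2 ≠ 0 := by nlinarith
  simp [post2, PB, Fintype.sum_bool]
  rw [← add_div, div_div_div_cancel_right₀]
  · rw [div_eq_div_iff (by nlinarith) (by linarith)]; ring
  · exact hD

lemma xney (h0 : 0 < δ) (h1 : δ < 1) : (1+δ)/(2+δ) ≠ (1-δ)/(2-δ) := by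
  intro h
  rw [div_eq_div_iff (by linarith) (by linarith)] at h
  nlinarith

lemma lossbd (h0 : 0 < δ) (h1 : δ < 1) (u v p q : ℝ) :
    (1-δ)/4 ≤ 1/2 * (1/4*q^2 + 1/4*p^2 + (1+δ)/4*(v-1)^2 + (1-δ)/4*(u-1)^2)
      + 1/2 * ((1+δ)/(4-2*δ^2)*u^2 + (1-δ)/(4-2*δ^2)*v^2
          + (1-δ^2)/(4-2*δ^2)*(p-1)^2 + (1-δ^2)/(4-2*δ^2)*(q-1)^2) := by
  have hD : (0:ℝ) < 4 - 2*δ^2 := by nlinarith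
  have c1 : (1+δ)/4 * u^2 ≤ (1+δ)/(4-2*δ^2) * u^2 :=
    mul_le_mul_of_nonneg_right
      (div_le_div_of_nonneg_left (by linarith) hD (by nlinarith)) (sq_nonneg u)
  have c2 : (1-δ)/4 * v^2 ≤ (1-δ)/(4-2*δ^2) * v^2 :=
    mul_le_mul_of_nonneg_right
      (div_le_div_of_nonneg_left (by linarith) hD (by nlinarith)) (sq_nonneg v)
  have c3 : (1-δ^2)/4 * (p-1)^2 ≤ (1-δ^2)/(4-2*δ^2) * (p-1)^2 :=
    mul_le_mul_of_nonneg_right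
      (div_le_div_of_nonneg_left (by nlinarith) hD (by nlinarith)) (sq_nonneg (p-1))
  have c4 : (1-δ^2)/4 * (q-1)^2 ≤ (1-δ^2)/(4-2*δ^2) * (q-1)^2 :=
    mul_le_mul_of_nonneg_right
      (div_le_div_of_nonneg_left (by nlinarith) hD (by nlinarith)) (sq_nonneg (q-1))
  have key : (1-δ)/4 ≤ 1/2 * (1/4*q^2 + 1/4*p^2 + (1+δ)/4*(v-1)^2 + (1-δ)/4*(u-1)^2)
      + 1/2 * ((1+δ)/4*u^2 + (1-δ)/4*v^2 + (1-δ^2)/4*(p-1)^2 + (1-δ^2)/4*(q-1)^2) := by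
    nlinarith [sq_nonneg (2*u-1), sq_nonneg (2*v-1), sq_nonneg (2*p-1), sq_nonneg (2*q-1),
      mul_nonneg h0.le (sq_nonneg u), mul_nonneg h0.le (sq_nonneg (v-1)),
      mul_nonneg (mul_nonneg h0.le (by linarith : (0:ℝ) ≤ 1-δ)) (sq_nonneg (2*p-1)),
      mul_nonneg (mul_nonneg h0.le (by linarith : (0:ℝ) ≤ 1-δ)) (sq_nonneg (2*q-1)),
      mul_nonneg (mul_nonneg h0.le h0.le) (sq_nonneg (p-1)),
      mul_nonneg (mul_nonneg h0.le h0.le) (sq_nonneg (q-1))]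
  linarith

end aux

/-- Proposition 3: (a) a decision rule knowing the realized structure and the
two forecasts determines the state a.s.; (b) any aggregation scheme using the forecasts
alone suffers square loss at least `1/4 - ε` under the mixture, for small `δ`. -/
theorem stmt_10 :
    (∀ δ : ℝ, δ ∈ Set.Ioo (0:ℝ) 1 →
      ∃ d : Bool → ℝ → ℝ → ℝ,
        (∀ j a b, d j a b = 0 ∨ d j a b = 1) ∧
        (∀ w s₁ s₂ : Bool, 0 < PA δ w s₁ s₂ →
            d false (post1 (PA δ) s₁) (post2 (PA δ) s₂) = (if w then 1 else 0)) ∧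
        (∀ w s₁ s₂ : Bool, 0 < PB δ w s₁ s₂ →
            d true (post1 (PB δ) s₁) (post2 (PB δ) s₂) = (if w then 1 else 0))) ∧
    (∀ ε : ℝ, 0 < ε → ∃ δ₀ : ℝ, 0 < δ₀ ∧
      ∀ δ : ℝ, δ ∈ Set.Ioo (0:ℝ) δ₀ →
      ∀ f : ℝ → ℝ → ℝ,
        (∀ a b : ℝ, a ∈ Set.Icc (0:ℝ) 1 → b ∈ Set.Icc (0:ℝ) 1 → f a b ∈ Set.Icc (0:ℝ) 1) →
        mixLoss δ f ≥ 1/4 - ε) := by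
  classical
  constructor
  · rintro δ ⟨h0, h1⟩
    refine ⟨fun j a b => if (a = b ↔ j = false) then 1 else 0, ?_, ?_, ?_⟩
    · intro j a b
      by_cases h : (a = b ↔ j = false) <;> simp [h]
    · intro w s₁ s₂ hp
      have hne := xney h0 h1
      cases w <;> cases s₁ <;> cases s₂ <;>
        simp [PA] at hp <;>
        simp [pA1f h0 h1, pA1t h0 h1, pA2f h0 h1, pA2t h0 h1, hne, Ne.symm hne]
    · intro w s₁ s₂ hp
      have hne := xney h0 h1
      cases w <;> cases s₁ <;> cases s₂ <;>
        simp [PB] at hp <;>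
        simp [pB1f h0 h1, pB1t h0 h1, pB2f h0 h1, pB2t h0 h1, hne, Ne.symm hne]
  · intro ε hε
    refine ⟨min (2*ε) 1, by positivity, ?_⟩
    rintro δ ⟨h0, hδ⟩ f hf
    have h1 : δ < 1 := lt_of_lt_of_le hδ (min_le_right _ _)
    have h2 : δ < 2*ε := lt_of_lt_of_le hδ (min_le_left _ _)
    set x : ℝ := (1-δ)/(2-δ) with hx
    set y : ℝ := (1+δ)/(2+δ) with hy
    have hml : mixLoss δ f
        = 1/2 * (1/4*(f y x)^2 + 1/4*(f x y)^2 + (1+δ)/4*(f y y-1)^2 + (1-δ)/4*(f x x-1)^2)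
          + 1/2 * ((1+δ)/(4-2*δ^2)*(f x x)^2 + (1-δ)/(4-2*δ^2)*(f y y)^2
              + (1-δ^2)/(4-2*δ^2)*(f x y-1)^2 + (1-δ^2)/(4-2*δ^2)*(f y x-1)^2) := by
      simp [mixLoss, PA, PB, Fintype.sum_bool, pA1f h0 h1, pA1t h0 h1, pA2f h0 h1,
        pA2t h0 h1, pB1f h0 h1, pB1t h0 h1, pB2f h0 h1, pB2t h0 h1]
      ring
    rw [ge_iff_le, hml]
    have := lossbd h0 h1 (f x x) (f y y) (f x y) (f y x)
    linarith
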